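/- arXiv:dg-ga/9603014 — 5 statements merged into one kernel-verified Lean document; each statement's English description precedes it below -/
import Mathlib

section
/- Let V and W be real inner product spaces and B : V × V → W a symmetric bilinear map with ‖B(u,u)‖ = c‖u‖² for all u (c ≥ 0 constant). For orthonormal u, v ∈ V define K(u,v) = ⟨B(u,u), B(v,v)⟩ − ‖B(u,v)‖². Then K(u,v) = (3/2)⟨B(u,u), B(v,v)⟩ − (1/2)c². -/
open scoped RealInnerProductSpace

theorem stmt_1 {V W : Type*} [NormedAddCommGroup V] [InnerProductSpace ℝ V]
    [NormedAddCommGroup W] [InnerProductSpace ℝ W]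
    (B : V →ₗ[ℝ] V →ₗ[ℝ] W) (hsymm : ∀ u v : V, B u v = B v u)
    (c : ℝ) (hc : 0 ≤ c) (hB : ∀ u : V, ‖B u u‖ = c * ‖u‖ ^ 2)
    (u v : V) (hu : ‖u‖ = 1) (hv : ‖v‖ = 1) (huv : ⟪u, v⟫ = 0) :
    ⟪B u u, B v v⟫ - ‖B u v‖ ^ 2 =
      (3 / 2) * ⟪B u u, B v v⟫ - (1 / 2) * c ^ 2 := by
  set a := B u u with ha'
  set b := B v v with hb'
  set m := B u v with hm'
  have huu : ‖u + v‖ ^ 2 = 2 := by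
    rw [norm_add_sq_real, hu, hv, huv]; ring
  have huv2 : ‖u - v‖ ^ 2 = 2 := by
    rw [norm_sub_sq_real, hu, hv, huv]; ring
  have e1 : B (u + v) (u + v) = (a + b) + (2 : ℝ) • m := by
    simp only [map_add, LinearMap.add_apply, hsymm v u, two_smul, ha', hb', hm']
    abel
  have e2 : B (u - v) (u - v) = (a + b) - (2 : ℝ) • m := by
    simp only [map_sub, LinearMap.sub_apply, hsymm v u, two_smul, ha', hb', hm']
    abel
  have h1 : ‖(a + b) + (2 : ℝ) • m‖ ^ 2 = 4 * c ^ 2 := by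
    rw [← e1, hB, mul_pow, huu]; ring
  have h2 : ‖(a + b) - (2 : ℝ) • m‖ ^ 2 = 4 * c ^ 2 := by
    rw [← e2, hB, mul_pow, huv2]; ring
  rw [norm_add_sq_real] at h1
  rw [norm_sub_sq_real] at h2
  have habsq : ‖a + b‖ ^ 2 = ‖a‖ ^ 2 + 2 * ⟪a, b⟫ + ‖b‖ ^ 2 := norm_add_sq_real a b
  have hmsq : ‖(2 : ℝ) • m‖ ^ 2 = 4 * ‖m‖ ^ 2 := by
    rw [norm_smul]; simp; ring
  have hna : ‖a‖ = c := by rw [ha', hB, hu]; ring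
  have hnb : ‖b‖ = c := by rw [hb', hB, hv]; ring
  rw [habsq, hmsq, hna, hnb] at h1 h2
  linarith
end

section
/- Let V and W be real inner product spaces and B : V × V → W a symmetric bilinear map with ‖B(u,u)‖ = c‖u‖² for all u (c ≥ 0). For orthonormal u, v ∈ V, the quantity K(u,v) = ⟨B(u,u), B(v,v)⟩ − ‖B(u,v)‖² satisfies −2c² ≤ K(u,v) ≤ c². -/
set_option maxHeartbeats 1000000
open scoped RealInnerProductSpace

theorem stmt_2 {V W : Type*} [NormedAddCommGroup V] [InnerProductSpace ℝ V]
    [NormedAddCommGroup W] [InnerProductSpace ℝ W]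
    (B : V →ₗ[ℝ] V →ₗ[ℝ] W) (hsymm : ∀ u v : V, B u v = B v u)
    (c : ℝ) (hc : 0 ≤ c) (hB : ∀ u : V, ‖B u u‖ = c * ‖u‖ ^ 2)
    (u v : V) (hu : ‖u‖ = 1) (hv : ‖v‖ = 1) (huv : ⟪u, v⟫ = 0) :
    -2 * c ^ 2 ≤ ⟪B u u, B v v⟫ - ‖B u v‖ ^ 2 ∧
      ⟪B u u, B v v⟫ - ‖B u v‖ ^ 2 ≤ c ^ 2 := by
  set P := B u u with hP
  set Q := B v v with hQ
  set R := B u v with hR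
  have hnp : ‖u + v‖ ^ 2 = 2 := by
    rw [norm_add_sq_real, hu, hv, huv]; ring
  have hnm : ‖u - v‖ ^ 2 = 2 := by
    rw [norm_sub_sq_real, hu, hv, huv]; ring
  have hBp : B (u + v) (u + v) = P + Q + (2 : ℝ) • R := by
    simp only [map_add, LinearMap.add_apply, hP, hQ, hR, hsymm v u]
    module
  have hBm : B (u - v) (u - v) = P + Q - (2 : ℝ) • R := by
    simp only [map_sub, LinearMap.sub_apply, hP, hQ, hR, hsymm v u]
    module
  have h1 : ‖P + Q + (2 : ℝ) • R‖ ^ 2 = 4 * c ^ 2 := by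
    rw [← hBp]
    have := hB (u + v)
    rw [hnp] at this
    rw [this]; ring
  have h2 : ‖P + Q - (2 : ℝ) • R‖ ^ 2 = 4 * c ^ 2 := by
    rw [← hBm]
    have := hB (u - v)
    rw [hnm] at this
    rw [this]; ring
  have hpar : ‖P + Q + (2 : ℝ) • R‖ ^ 2 + ‖P + Q - (2 : ℝ) • R‖ ^ 2
      = 2 * ‖P + Q‖ ^ 2 + 2 * ‖(2 : ℝ) • R‖ ^ 2 := by
    have := parallelogram_law_with_norm ℝ (P + Q) ((2 : ℝ) • R)
    nlinarith [this, norm_nonneg (P + Q + (2:ℝ) • R), norm_nonneg (P + Q - (2:ℝ) • R),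
      norm_nonneg (P + Q), norm_nonneg ((2:ℝ) • R)]
  have hPn : ‖P‖ = c := by rw [hP, hB u, hu]; ring
  have hQn : ‖Q‖ = c := by rw [hQ, hB v, hv]; ring
  have hPQ : ‖P + Q‖ ^ 2 = 2 * c ^ 2 + 2 * ⟪P, Q⟫ := by
    rw [norm_add_sq_real, hPn, hQn]; ring
  have h2R : ‖(2 : ℝ) • R‖ ^ 2 = 4 * ‖R‖ ^ 2 := by
    rw [norm_smul]; simp; ring
  have hRval : ‖R‖ ^ 2 = (c ^ 2 - ⟪P, Q⟫) / 2 := by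
    rw [h1, h2, hPQ, h2R] at hpar; linarith
  have hcs : |⟪P, Q⟫| ≤ c ^ 2 := by
    calc |⟪P, Q⟫| ≤ ‖P‖ * ‖Q‖ := abs_real_inner_le_norm P Q
    _ = c ^ 2 := by rw [hPn, hQn]; ring
  rw [abs_le] at hcs
  constructor <;> [nlinarith; nlinarith]
end

section
/- With the hypotheses above (B symmetric bilinear, ‖B(u,u)‖ = c‖u‖² for all u, u and v orthonormal), equality K(u,v) = −2c² holds if and only if B(u,u) = −B(v,v), and equality K(u,v) = c² holds if and only if B(u,u) = B(v,v). -/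
open scoped RealInnerProductSpace

theorem stmt_3 {V W : Type*} [NormedAddCommGroup V] [InnerProductSpace ℝ V]
    [NormedAddCommGroup W] [InnerProductSpace ℝ W]
    (B : V →ₗ[ℝ] V →ₗ[ℝ] W) (hsymm : ∀ u v : V, B u v = B v u)
    (c : ℝ) (hc : 0 < c) (hB : ∀ u : V, ‖B u u‖ = c * ‖u‖ ^ 2)
    (u v : V) (hu : ‖u‖ = 1) (hv : ‖v‖ = 1) (huv : ⟪u, v⟫ = 0) :
    (⟪B u u, B v v⟫ - ‖B u v‖ ^ 2 = -2 * c ^ 2 ↔ B u u = -B v v) ∧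
      (⟪B u u, B v v⟫ - ‖B u v‖ ^ 2 = c ^ 2 ↔ B u u = B v v) := by
  set a := B u u with ha
  set b := B v v with hb
  set m := B u v with hm
  have hmv : B v u = m := (hsymm v u).symm ▸ rfl
  have hna : ‖a‖ = c := by simpa [hu] using hB u
  have hnb : ‖b‖ = c := by simpa [hv] using hB v
  have hsum : ‖u + v‖ ^ 2 = 2 := by rw [norm_add_sq_real, hu, hv, huv]; ring
  have hdiff : ‖u - v‖ ^ 2 = 2 := by rw [norm_sub_sq_real, hu, hv, huv]; ring
  have hBs : B (u + v) (u + v) = a + m + m + b := by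
    simp only [map_add, LinearMap.add_apply, ← ha, ← hb, ← hm, hmv]
    abel
  have hBd : B (u - v) (u - v) = a - m - m + b := by
    simp only [map_sub, LinearMap.sub_apply, ← ha, ← hb, ← hm, hmv]
    abel
  have h1 : ⟪a + m + m + b, a + m + m + b⟫ = 4 * c ^ 2 := by
    have h := hB (u + v)
    rw [hBs, hsum] at h
    rw [real_inner_self_eq_norm_sq, h]; ring
  have h2 : ⟪a - m - m + b, a - m - m + b⟫ = 4 * c ^ 2 := by
    have h := hB (u - v)
    rw [hBd, hdiff] at h
    rw [real_inner_self_eq_norm_sq, h]; ring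
  simp only [inner_add_left, inner_add_right, inner_sub_left, inner_sub_right] at h1 h2
  have cam := real_inner_comm a m
  have cbm := real_inner_comm b m
  have cab := real_inner_comm a b
  have hsa : ⟪a, a⟫ = c ^ 2 := by rw [real_inner_self_eq_norm_sq, hna]
  have hsb : ⟪b, b⟫ = c ^ 2 := by rw [real_inner_self_eq_norm_sq, hnb]
  have hsm : ⟪m, m⟫ = ‖m‖ ^ 2 := real_inner_self_eq_norm_sq m
  have key : ⟪a, b⟫ = c ^ 2 - 2 * ‖m‖ ^ 2 := by linarith
  have hc2 : c ≠ 0 := ne_of_gt hc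
  constructor
  · constructor
    · intro h
      have hab : ⟪a, b⟫ = -c ^ 2 := by linarith
      have : ⟪a, -b⟫ = ‖a‖ * ‖-b‖ := by
        rw [inner_neg_right, hab, hna, norm_neg, hnb]; ring
      have := inner_eq_norm_mul_iff_real.mp this
      rw [norm_neg, hna, hnb] at this
      exact smul_right_injective W hc2 this
    · intro h
      have hab : ⟪a, b⟫ = -(c ^ 2) := by
        rw [h, inner_neg_left, hsb]
      linarith [key, hab]
  · constructor
    · intro h
      have hab : ⟪a, b⟫ = ‖a‖ * ‖b‖ := by
        have : ⟪a, b⟫ = c ^ 2 := by linarith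
        rw [hna, hnb, this]; ring
      have := inner_eq_norm_mul_iff_real.mp hab
      rw [hna, hnb] at this
      exact smul_right_injective W hc2 this
    · intro h
      have hab : ⟪a, b⟫ = c ^ 2 := by rw [h, hsb]
      linarith [key, hab]
end

section
/- Let V and W be real inner product spaces with dim W = 1, and let B : V × V → W be a symmetric bilinear map with ‖B(u,u)‖ = c‖u‖² for all u ∈ V (c ≥ 0). Then there is a unit vector e ∈ W and a sign ε ∈ {±1} such that B(u,v) = ε c ⟨u,v⟩ e for all u, v ∈ V; consequently, for orthonormal u, v, K(u,v) = ⟨B(u,u),B(v,v)⟩ − ‖B(u,v)‖² = c². -/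
open scoped RealInnerProductSpace

theorem stmt_4 {V W : Type*} [NormedAddCommGroup V] [InnerProductSpace ℝ V]
    [NormedAddCommGroup W] [InnerProductSpace ℝ W]
    (hV : 2 ≤ Module.finrank ℝ V) (hW : Module.finrank ℝ W = 1)
    (B : V →ₗ[ℝ] V →ₗ[ℝ] W) (hsymm : ∀ u v : V, B u v = B v u)
    (c : ℝ) (hc : 0 ≤ c) (hB : ∀ u : V, ‖B u u‖ = c * ‖u‖ ^ 2) :
    (∃ (e : W) (ε : ℝ), ‖e‖ = 1 ∧ (ε = 1 ∨ ε = -1) ∧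
      ∀ u v : V, B u v = (ε * c * ⟪u, v⟫) • e) ∧
    ∀ u v : V, ‖u‖ = 1 → ‖v‖ = 1 → ⟪u, v⟫ = 0 →
      ⟪B u u, B v v⟫ - ‖B u v‖ ^ 2 = c ^ 2 := by
  have hWfin : FiniteDimensional ℝ W := FiniteDimensional.of_finrank_eq_succ hW
  have : Nontrivial W := Module.nontrivial_of_finrank_pos (by omega : 0 < Module.finrank ℝ W)
  obtain ⟨w, hw⟩ := exists_ne (0 : W)
  set e := ‖w‖⁻¹ • w with he
  have hne : ‖e‖ = 1 := norm_smul_inv_norm hw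
  have he0 : e ≠ 0 := by
    intro h
    rw [h, norm_zero] at hne
    norm_num at hne
  have hespan : Submodule.span ℝ {e} = ⊤ := by
    apply Submodule.eq_top_of_finrank_eq
    rw [finrank_span_singleton he0, hW]
  have hrep : ∀ x : W, x = ⟪e, x⟫ • e := by
    intro x
    have hx : x ∈ Submodule.span ℝ {e} := hespan ▸ Submodule.mem_top
    obtain ⟨a, rfl⟩ := Submodule.mem_span_singleton.mp hx
    rw [real_inner_smul_right, real_inner_self_eq_norm_sq, hne]
    norm_num
  have hnormrep : ∀ x : W, ‖x‖ = |⟪e, x⟫| := by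
    intro x
    conv_lhs => rw [hrep x]
    rw [norm_smul, hne, mul_one, Real.norm_eq_abs]
  have hcases : ∀ u : V, ⟪e, B u u⟫ = c * ‖u‖ ^ 2 ∨ ⟪e, B u u⟫ = -(c * ‖u‖ ^ 2) := by
    intro u
    have h := hB u
    rw [hnormrep] at h
    exact (abs_eq (by positivity)).mp h
  have hq : ∀ (u v : V) (l : ℝ), ⟪e, B (v + l • u) (v + l • u)⟫ =
      ⟪e, B v v⟫ + 2 * l * ⟪e, B v u⟫ + l ^ 2 * ⟪e, B u u⟫ := by
    intro u v l
    have hBe : B (v + l • u) (v + l • u) =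
        B v v + (2 * l) • B v u + (l ^ 2) • B u u := by
      rw [map_add, LinearMap.map_smul]
      simp only [LinearMap.add_apply, LinearMap.smul_apply, map_add, LinearMap.map_smul,
        hsymm u v]
      module
    rw [hBe]
    simp only [inner_add_right, real_inner_smul_right]
    try ring
  have hn : ∀ (u v : V) (l : ℝ), ‖v + l • u‖ ^ 2 =
      ‖v‖ ^ 2 + 2 * l * ⟪v, u⟫ + l ^ 2 * ‖u‖ ^ 2 := by
    intro u v l
    rw [norm_add_sq_real, real_inner_smul_right, norm_smul, Real.norm_eq_abs, mul_pow, sq_abs]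
    try ring
  have hsign : (∀ u : V, ⟪e, B u u⟫ = c * ‖u‖ ^ 2) ∨
      (∀ u : V, ⟪e, B u u⟫ = -(c * ‖u‖ ^ 2)) := by
    rcases eq_or_lt_of_le hc with hc0 | hc'
    · left
      intro u
      rcases hcases u with h | h
      · exact h
      · rw [h, ← hc0]; ring
    · by_contra hcon
      push_neg at hcon
      obtain ⟨⟨u, hu⟩, ⟨v, hv⟩⟩ := hcon
      have hgu : ⟪e, B u u⟫ = -(c * ‖u‖ ^ 2) := (hcases u).resolve_left hu
      have hgv : ⟪e, B v v⟫ = c * ‖v‖ ^ 2 := (hcases v).resolve_right hv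
      have ha : 0 < ‖u‖ ^ 2 := by
        rcases eq_or_ne u 0 with rfl | h
        · simp at hu
        · have := norm_pos_iff.mpr h
          positivity
      have hb : 0 < ‖v‖ ^ 2 := by
        rcases eq_or_ne v 0 with rfl | h
        · simp at hv
        · have := norm_pos_iff.mpr h
          positivity
      have hca := mul_pos hc' ha
      have hcb := mul_pos hc' hb
      have h1 := hcases (v + (1 : ℝ) • u)
      have h2 := hcases (v + (2 : ℝ) • u)
      have h3 := hcases (v + (3 : ℝ) • u)
      rw [hq u v 1, hn u v 1, hgu, hgv] at h1
      rw [hq u v 2, hn u v 2, hgu, hgv] at h2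
      rw [hq u v 3, hn u v 3, hgu, hgv] at h3
      rcases h1 with h1 | h1 <;> rcases h2 with h2 | h2 <;> rcases h3 with h3 | h3 <;>
        linarith [hca, hcb]
  have hmain : ∃ (e : W) (ε : ℝ), ‖e‖ = 1 ∧ (ε = 1 ∨ ε = -1) ∧
      ∀ u v : V, B u v = (ε * c * ⟪u, v⟫) • e := by
    rcases hsign with hs | hs
    · refine ⟨e, 1, hne, Or.inl rfl, fun u v => ?_⟩
      have key : ⟪e, B u v⟫ = c * ⟪u, v⟫ := by
        have hpol := hq v u 1
        rw [one_smul] at hpol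
        have h1 := hs (u + v)
        rw [hpol, hs u, hs v, norm_add_sq_real] at h1
        linarith [h1]
      conv_lhs => rw [hrep (B u v)]
      rw [key]
      ring_nf
    · refine ⟨e, -1, hne, Or.inr rfl, fun u v => ?_⟩
      have key : ⟪e, B u v⟫ = -(c * ⟪u, v⟫) := by
        have hpol := hq v u 1
        rw [one_smul] at hpol
        have h1 := hs (u + v)
        rw [hpol, hs u, hs v, norm_add_sq_real] at h1
        linarith [h1]
      conv_lhs => rw [hrep (B u v)]
      rw [key]
      ring_nf
  refine ⟨hmain, ?_⟩
  obtain ⟨e', ε, he', hε, hBe⟩ := hmain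
  intro u v hu hv huv
  rw [hBe u u, hBe v v, hBe u v, huv]
  have h0 : (ε * c * (0 : ℝ)) • e' = (0 : W) := by simp
  rw [h0]
  simp only [real_inner_smul_left, real_inner_smul_right, real_inner_self_eq_norm_sq,
    he', hu, hv, norm_zero]
  rcases hε with rfl | rfl <;> simp [norm_smul, he', sq_abs]
end

section
/- Let V, W be real inner product spaces, B : V × V → W symmetric bilinear with ‖B(u,u)‖ = c‖u‖² for all u ∈ V. Then for orthonormal u, v ∈ V one has ‖B(u,v)‖² = c² − (1/2)(c² + ⟨B(u,u), B(v,v)⟩), and in particular ‖B(u,v)‖² ≤ (3/2) c² and ‖B(u,v)‖² ≥ 0 forces ⟨B(u,u), B(v,v)⟩ ≤ c². -/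
open scoped RealInnerProductSpace

theorem stmt_12 {V W : Type*} [NormedAddCommGroup V] [InnerProductSpace ℝ V]
    [NormedAddCommGroup W] [InnerProductSpace ℝ W]
    (B : V →ₗ[ℝ] V →ₗ[ℝ] W) (hsymm : ∀ u v : V, B u v = B v u)
    (c : ℝ) (hB : ∀ u : V, ‖B u u‖ = c * ‖u‖ ^ 2)
    (u v : V) (hu : ‖u‖ = 1) (hv : ‖v‖ = 1) (huv : ⟪u, v⟫ = 0) :
    ‖B u v‖ ^ 2 = c ^ 2 - (1 / 2) * (c ^ 2 + ⟪B u u, B v v⟫) ∧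
      ‖B u v‖ ^ 2 ≤ (3 / 2) * c ^ 2 ∧ ⟪B u u, B v v⟫ ≤ c ^ 2 := by
  have hcu : ‖B u u‖ = c := by rw [hB u, hu]; ring
  have hcv : ‖B v v‖ = c := by rw [hB v, hv]; ring
  have h2 : ‖u + v‖ ^ 2 = 2 := by rw [norm_add_sq_real, hu, hv, huv]; ring
  have h2' : ‖u - v‖ ^ 2 = 2 := by rw [norm_sub_sq_real, hu, hv, huv]; ring
  have he : B (u + v) (u + v) = (B u u + B v v) + (2 : ℝ) • B u v := by
    simp only [map_add, LinearMap.add_apply, two_smul]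
    rw [hsymm v u]; abel
  have he' : B (u - v) (u - v) = (B u u + B v v) - (2 : ℝ) • B u v := by
    simp only [map_sub, LinearMap.sub_apply, two_smul]
    rw [hsymm v u]; abel
  have hp : ‖(B u u + B v v) + (2 : ℝ) • B u v‖ ^ 2 = 4 * c ^ 2 := by
    rw [← he, hB, mul_pow, h2]; ring
  have hm : ‖(B u u + B v v) - (2 : ℝ) • B u v‖ ^ 2 = 4 * c ^ 2 := by
    rw [← he', hB, mul_pow, h2']; ring
  rw [norm_add_sq_real] at hp
  rw [norm_sub_sq_real] at hm
  have hw : ‖(2 : ℝ) • B u v‖ ^ 2 = 4 * ‖B u v‖ ^ 2 := by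
    rw [norm_smul]; simp; ring
  have ha : ‖B u u + B v v‖ ^ 2 = 2 * c ^ 2 + 2 * ⟪B u u, B v v⟫ := by
    rw [norm_add_sq_real, hcu, hcv]; ring
  have hmain : ‖B u v‖ ^ 2 = c ^ 2 - (1 / 2) * (c ^ 2 + ⟪B u u, B v v⟫) := by
    linarith [hp, hm, hw, ha]
  have habs : |⟪B u u, B v v⟫| ≤ c * c := by
    calc |⟪B u u, B v v⟫| ≤ ‖B u u‖ * ‖B v v‖ := abs_real_inner_le_norm _ _
    _ = c * c := by rw [hcu, hcv]
  have hlb : -(c ^ 2) ≤ ⟪B u u, B v v⟫ := by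
    have h := (abs_le.mp habs).1
    have : c * c = c ^ 2 := by ring
    linarith
  have h0 : (0:ℝ) ≤ ‖B u v‖ ^ 2 := sq_nonneg _
  exact ⟨hmain, by linarith, by linarith⟩
end
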